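/- For the parameter choice r_L = 1/19, PH3 satisfies PH3_{1/19}(I) ≤ (33/19)·OPT(I) + 9/2 for every finite list I of items in (0,1]. In particular, PH3 with r_L = 1/19 is asymptotically (33/19)-competitive. -/

import Mathlib

/-- A packing of the list `I` of item sizes into `m` unit-capacity bins:
an assignment of item indices to bins such that each bin's contents sum to at most 1. -/
def IsPacking (I : List ℝ) (m : ℕ) (f : Fin I.length → Fin m) : Prop :=
  ∀ b : Fin m, ∑ i ∈ Finset.univ.filter (fun i => f i = b), I.get i ≤ 1

/-- `OPT I` is the minimum number of unit-capacity bins needed to pack `I`. -/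
noncomputable def OPT (I : List ℝ) : ℕ :=
  sInf {m | ∃ f : Fin I.length → Fin m, IsPacking I m f}

/-- The state maintained by the online algorithm PH3:
* `nXL`: number of XL-bins (each holds one extra large item);
* `nLarge`: number of large items so far, i.e. number of L-bins whose 2/3-sub-bin is used;
* `nM`: number of M-bins; `mOpen`: whether the current M-bin contains exactly one medium item;
* `nS`: number of S-bins; `sLevel`: level of the currently open S-bin;
* `nLS`: number of 1/3-sub-bins of L-bins used by small items so far;
  `lsLevel`: level of the currently open 1/3-sub-bin;
* `sizeSL`: total size of small items packed into L-bins so far;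
* `sizeS`: total size of all small items packed so far. -/
structure PH3State where
  nXL : ℕ
  nLarge : ℕ
  nM : ℕ
  mOpen : Bool
  nS : ℕ
  sLevel : ℝ
  nLS : ℕ
  lsLevel : ℝ
  sizeSL : ℝ
  sizeS : ℝ

/-- One step of PH3 with parameter `rL`: how the state changes upon arrival of item `a`.
Extra large items (`a ≥ 2/3`) get a new XL-bin; large items (`1/2 < a < 2/3`) get (the
2/3-sub-bin of) a new L-bin; medium items (`1/3 < a ≤ 1/2`) are paired in M-bins; a small
item (`a ≤ 1/3`) goes next-fit into the 1/3-sub-bins of L-bins if the total size of small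
items already packed into L-bins is smaller than `rL` times the total size of all small
items packed so far, and otherwise next-fit into S-bins. -/
noncomputable def PH3step (rL : ℝ) (st : PH3State) (a : ℝ) : PH3State :=
  if 2/3 ≤ a then
    { st with nXL := st.nXL + 1 }
  else if 1/2 < a then
    { st with nLarge := st.nLarge + 1 }
  else if 1/3 < a then
    if st.mOpen then { st with mOpen := false }
    else { st with nM := st.nM + 1, mOpen := true }
  else
    if st.sizeSL < rL * st.sizeS then
      -- pack into the 1/3-sub-bin of an L-bin, next-fit
      if st.nLS = 0 ∨ 1/3 < st.lsLevel + a then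
        { st with nLS := st.nLS + 1, lsLevel := a,
                  sizeSL := st.sizeSL + a, sizeS := st.sizeS + a }
      else
        { st with lsLevel := st.lsLevel + a,
                  sizeSL := st.sizeSL + a, sizeS := st.sizeS + a }
    else
      -- pack into an S-bin, next-fit
      if st.nS = 0 ∨ 1 < st.sLevel + a then
        { st with nS := st.nS + 1, sLevel := a, sizeS := st.sizeS + a }
      else
        { st with sLevel := st.sLevel + a, sizeS := st.sizeS + a }

/-- The number of bins used by PH3 with parameter `rL` on the input list `I`: the number of
XL-bins, plus the number of L-bins (an L-bin counts once whether it received a large item,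
small items, or both, so this is the maximum of `nLarge` and `nLS`), plus the number of
M-bins, plus the number of S-bins. -/
noncomputable def PH3 (rL : ℝ) (I : List ℝ) : ℕ :=
  let st := I.foldl (PH3step rL) ⟨0, 0, 0, false, 0, 0, 0, 0, 0, 0⟩
  st.nXL + max st.nLarge st.nLS + st.nM + st.nS

lemma opt_packing (I : List ℝ) (hI : ∀ a ∈ I, a ≤ 1) :
    ∃ f : Fin I.length → Fin (OPT I), IsPacking I (OPT I) f := by
  have hne : {m | ∃ f : Fin I.length → Fin m, IsPacking I m f}.Nonempty := by
    refine ⟨I.length, id, fun b => ?_⟩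
    have : Finset.univ.filter (fun i => id i = b) = {b} := by
      ext i; simp [eq_comm]
    rw [this, Finset.sum_singleton]
    exact hI _ (List.get_mem I b)
  exact Nat.sInf_mem hne

lemma opt_size (I : List ℝ) (hI : ∀ a ∈ I, a ≤ 1) : I.sum ≤ (OPT I : ℝ) := by
  obtain ⟨f, hf⟩ := opt_packing I hI
  have h1 : I.sum = ∑ i : Fin I.length, I.get i := by
    conv_lhs => rw [← List.ofFn_get I]
    rw [List.sum_ofFn]
  rw [h1, ← Finset.sum_fiberwise Finset.univ f (fun i => I.get i)]
  calc ∑ b : Fin (OPT I), ∑ i ∈ Finset.univ.filter (fun i => f i = b), I.get i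
      ≤ ∑ _b : Fin (OPT I), (1:ℝ) := Finset.sum_le_sum (fun b _ => hf b)
    _ = OPT I := by simp

lemma opt_half (I : List ℝ) (hI : ∀ a ∈ I, 0 < a ∧ a ≤ 1) :
    (Finset.univ.filter (fun i : Fin I.length => 1/2 < I.get i)).card ≤ OPT I := by
  obtain ⟨f, hf⟩ := opt_packing I (fun a ha => (hI a ha).2)
  calc (Finset.univ.filter (fun i : Fin I.length => 1/2 < I.get i)).card
      ≤ (Finset.univ : Finset (Fin (OPT I))).card := by
        refine Finset.card_le_card_of_injOn f (fun _ _ => Finset.mem_univ _) ?_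
        intro i hi j hj hij
        by_contra hne
        simp only [Finset.coe_filter, Set.mem_setOf_eq, Finset.mem_univ, true_and] at hi hj
        have hsub : ({i, j} : Finset (Fin I.length)) ⊆
            Finset.univ.filter (fun k => f k = f j) := by
          intro k hk
          simp only [Finset.mem_insert, Finset.mem_singleton] at hk
          rcases hk with rfl | rfl <;> simp [hij]
        have h2 : I.get i + I.get j ≤ ∑ k ∈ Finset.univ.filter (fun k => f k = f j), I.get k := by
          rw [← Finset.sum_pair hne]
          exact Finset.sum_le_sum_of_subset_of_nonneg hsub
            (fun k _ _ => le_of_lt (hI _ (List.get_mem I k)).1)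
        have := hf (f j)
        linarith
    _ = OPT I := by simp

lemma opt_third (I : List ℝ) (hI : ∀ a ∈ I, 0 < a ∧ a ≤ 1) :
    (Finset.univ.filter (fun i : Fin I.length => 1/3 < I.get i)).card ≤ 2 * OPT I := by
  obtain ⟨f, hf⟩ := opt_packing I (fun a ha => (hI a ha).2)
  set T := Finset.univ.filter (fun i : Fin I.length => 1/3 < I.get i) with hT
  have : T.card = ∑ b : Fin (OPT I), (T.filter (fun i => f i = b)).card :=
    Finset.card_eq_sum_card_fiberwise (fun i _ => Finset.mem_univ (f i))
  rw [this]
  calc ∑ b : Fin (OPT I), (T.filter (fun i => f i = b)).card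
      ≤ ∑ _b : Fin (OPT I), 2 := by
        refine Finset.sum_le_sum (fun b _ => ?_)
        by_contra hgt
        push_neg at hgt
        obtain ⟨i, hi, j, hj, k, hk, hij, hik, hjk⟩ := Finset.two_lt_card.mp hgt
        simp only [hT, Finset.mem_filter, Finset.mem_univ, true_and] at hi hj hk
        have hsub : ({i, j, k} : Finset (Fin I.length)) ⊆
            Finset.univ.filter (fun x => f x = b) := by
          intro x hx
          simp only [Finset.mem_insert, Finset.mem_singleton] at hx
          rcases hx with rfl | rfl | rfl <;> simp [hi.2, hj.2, hk.2]
        have hset : ∑ x ∈ ({i, j, k} : Finset (Fin I.length)), I.get x =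
            I.get i + I.get j + I.get k := by
          rw [Finset.sum_insert (by simp [hij, hik]), Finset.sum_pair hjk, add_assoc]
        have hs : I.get i + I.get j + I.get k ≤
            ∑ x ∈ Finset.univ.filter (fun x => f x = b), I.get x := by
          rw [← hset]
          exact Finset.sum_le_sum_of_subset_of_nonneg hsub
            (fun x _ _ => le_of_lt (hI _ (List.get_mem I x)).1)
        have := hf b
        linarith [hi.1, hj.1, hk.1]
    _ = 2 * OPT I := by simp [mul_comm]

def PH3Inv (st : PH3State) (S C12 C13 : ℝ) : Prop :=
  0 ≤ st.sLevel ∧ 0 ≤ st.lsLevel ∧ 0 ≤ st.sizeSL ∧ st.sizeSL ≤ st.sizeS ∧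
  (st.nS = 0 → st.sizeS = st.sizeSL) ∧
  (1 ≤ st.nS → 2/3 * ((st.nS : ℝ) - 1) + st.sLevel ≤ st.sizeS - st.sizeSL) ∧
  (1 ≤ st.nLS → ((st.nLS : ℝ) - 1)/3 ≤ 2 * st.sizeSL - st.lsLevel) ∧
  st.sizeSL ≤ (1/19) * st.sizeS + 1/3 ∧
  (1/19) * st.sizeS - 1/57 ≤ st.sizeSL ∧
  ((st.nXL : ℝ) + (st.nLarge : ℝ) ≤ C12) ∧
  ((st.nXL : ℝ) + (st.nLarge : ℝ) + 2 * (st.nM : ℝ) ≤ C13 + (st.mOpen.toNat : ℝ)) ∧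
  (2/3 * (st.nXL : ℝ) + 1/2 * (st.nLarge : ℝ) + 2/3 * (st.nM : ℝ) + st.sizeS
    ≤ S + 1/3 * (st.mOpen.toNat : ℝ))

set_option maxHeartbeats 1600000 in
lemma step_inv {st : PH3State} {S C12 C13 : ℝ} {a : ℝ} (ha : 0 < a) (ha1 : a ≤ 1)
    (h : PH3Inv st S C12 C13) :
    PH3Inv (PH3step (1/19) st a) (S + a) (C12 + if 1/2 < a then 1 else 0)
      (C13 + if 1/3 < a then 1 else 0) := by
  obtain ⟨h1, h2, h3, h4, h5, h6, h7, h8, h9, h10, h11, h12⟩ := h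
  set i12 : ℝ := if 1/2 < a then 1 else 0 with hi12
  set i13 : ℝ := if 1/3 < a then 1 else 0 with hi13
  have e12 : 1/2 < a → i12 = 1 := fun h => by rw [hi12, if_pos h]
  have e13 : 1/3 < a → i13 = 1 := fun h => by rw [hi13, if_pos h]
  have f12 : ¬ (1/2 < a) → i12 = 0 := fun h => by rw [hi12, if_neg h]
  have f13 : ¬ (1/3 < a) → i13 = 0 := fun h => by rw [hi13, if_neg h]
  unfold PH3step
  split_ifs with hXL hL hM hmo hSL hnew hnew2
  -- branch 1: extra large
  · rw [e12 (by linarith), e13 (by linarith)]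
    unfold PH3Inv
    dsimp only
    push_cast
    exact ⟨h1, h2, h3, h4, h5, by push_cast at h6 ⊢; exact h6, by push_cast at h7 ⊢; exact h7,
      h8, h9, by linarith, by linarith, by linarith⟩
  -- branch 2: large
  · rw [e12 hL, e13 (by linarith)]
    unfold PH3Inv
    dsimp only
    push_cast
    exact ⟨h1, h2, h3, h4, h5, by push_cast at h6 ⊢; exact h6, by push_cast at h7 ⊢; exact h7,
      h8, h9, by linarith, by linarith, by linarith⟩
  -- branch 3: medium, mOpen = true
  · rw [f12 hL, e13 hM]
    rw [hmo] at h11 h12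
    simp only [Bool.toNat_true] at h11 h12
    unfold PH3Inv
    dsimp only
    simp only [Bool.toNat_false, add_zero]
    push_cast at h11 h12 ⊢
    exact ⟨h1, h2, h3, h4, h5, h6, h7, h8, h9, by linarith, by linarith, by linarith⟩
  -- branch 4: medium, mOpen = false
  · rw [f12 hL, e13 hM]
    rw [Bool.not_eq_true] at hmo
    rw [hmo] at h11 h12
    simp only [Bool.toNat_false] at h11 h12
    unfold PH3Inv
    dsimp only
    simp only [Bool.toNat_true, add_zero]
    push_cast at h11 h12 ⊢
    exact ⟨h1, h2, h3, h4, h5, h6, h7, h8, h9, by linarith, by linarith, by linarith⟩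
  -- small branches
  all_goals rw [f12 hL, f13 hM]
  all_goals have ha3 : a ≤ 1/3 := not_lt.mp hM
  all_goals unfold PH3Inv
  all_goals dsimp only
  all_goals simp only [add_zero]
  all_goals push_cast
  -- branch 5: to L-sub-bin, new sub-bin
  · refine ⟨h1, le_of_lt ha, by linarith, by linarith, ?_, ?_, ?_, by linarith, by linarith,
      h10, h11, by linarith⟩
    · intro hns; linarith [h5 hns]
    · intro hns; push_cast at h6; linarith [h6 hns]
    · intro _
      rcases Nat.eq_zero_or_pos st.nLS with h0 | hpos
      · rw [h0]; push_cast; linarith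
      · have h7' := h7 hpos
        push_cast at h7'
        rcases hnew with h0 | hgt
        · exact absurd h0 (Nat.pos_iff_ne_zero.mp hpos)
        · linarith
  -- branch 6: to L-sub-bin, same sub-bin
  · push_neg at hnew
    obtain ⟨hn0, hle⟩ := hnew
    have hpos : 1 ≤ st.nLS := Nat.one_le_iff_ne_zero.mpr hn0
    have h7' := h7 hpos
    push_cast at h7'
    refine ⟨h1, by linarith, by linarith, by linarith, ?_, ?_, ?_, by linarith, by linarith,
      h10, h11, by linarith⟩
    · intro hns; linarith [h5 hns]
    · intro hns; push_cast at h6; linarith [h6 hns]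
    · intro _; push_cast at hpos ⊢; linarith
  -- branch 7: to S-bin, new bin
  · have hge : (1:ℝ)/19 * st.sizeS ≤ st.sizeSL := not_lt.mp hSL
    refine ⟨le_of_lt ha, h2, h3, by linarith, ?_, ?_, h7, by linarith, by linarith,
      h10, h11, by linarith⟩
    · intro hns; exfalso; push_cast at hns
    · intro _
      rcases hnew2 with h0 | hgt
      · have h5' := h5 h0
        rw [h0]
        push_cast
        linarith
      · rcases Nat.eq_zero_or_pos st.nS with h0 | hpos
        · have h5' := h5 h0
          rw [h0]
          push_cast
          linarith
        · have h6' := h6 hpos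
          push_cast at h6'
          push_cast at hpos ⊢
          linarith
  -- branch 8: to S-bin, same bin
  · push_neg at hnew2
    obtain ⟨hn0, hle⟩ := hnew2
    have hpos : 1 ≤ st.nS := Nat.one_le_iff_ne_zero.mpr hn0
    have h6' := h6 hpos
    push_cast at h6'
    have hge : (1:ℝ)/19 * st.sizeS ≤ st.sizeSL := not_lt.mp hSL
    refine ⟨by linarith, h2, h3, by linarith, ?_, ?_, h7, by linarith, by linarith,
      h10, h11, by linarith⟩
    · intro hns; exact absurd hns hn0
    · intro _; linarith

lemma init_inv : PH3Inv ⟨0, 0, 0, false, 0, 0, 0, 0, 0, 0⟩ 0 0 0 := by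
  unfold PH3Inv
  norm_num

lemma fold_inv (l : List ℝ) : ∀ (st : PH3State) (S C12 C13 : ℝ),
    (∀ a ∈ l, 0 < a ∧ a ≤ 1) → PH3Inv st S C12 C13 →
    PH3Inv (l.foldl (PH3step (1/19)) st) (S + l.sum)
      (C12 + (l.map (fun a => if 1/2 < a then (1:ℝ) else 0)).sum)
      (C13 + (l.map (fun a => if 1/3 < a then (1:ℝ) else 0)).sum) := by
  induction l with
  | nil => intro st S C12 C13 _ h; simpa using h
  | cons a t ih =>
    intro st S C12 C13 hmem h
    simp only [List.foldl_cons, List.sum_cons, List.map_cons]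
    have h' := step_inv (hmem a (by simp)).1 (hmem a (by simp)).2 h
    have h2 := ih (PH3step (1/19) st a) _ _ _ (fun b hb => hmem b (by simp [hb])) h'
    rw [← add_assoc, ← add_assoc, ← add_assoc]
    exact h2

lemma map_ite_sum (I : List ℝ) (p : ℝ → Prop) [DecidablePred p] :
    (I.map (fun a => if p a then (1:ℝ) else 0)).sum
      = ((Finset.univ.filter (fun i : Fin I.length => p (I.get i))).card : ℝ) := by
  classical
  rw [← List.ofFn_getElem_eq_map, List.sum_ofFn]
  rw [Finset.card_filter]
  push_cast
  refine Finset.sum_congr rfl (fun i _ => ?_)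
  simp [List.get_eq_getElem]

/-- PH3 with the optimal single-copy parameter `r_L = 1/19` is asymptotically
`33/19`-competitive: `PH3_{1/19}(I) ≤ (33/19)·OPT(I) + 9/2` for every input list `I` of
items in `(0,1]`. -/
theorem PH3_single_copy_competitive (I : List ℝ) (hI : ∀ a ∈ I, 0 < a ∧ a ≤ 1) :
    (PH3 (1/19) I : ℝ) ≤ 33/19 * (OPT I : ℝ) + 9/2 := by
  classical
  set st := I.foldl (PH3step (1/19)) ⟨0, 0, 0, false, 0, 0, 0, 0, 0, 0⟩ with hst
  have hPH3 : (PH3 (1/19) I : ℝ)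
      = ((st.nXL + max st.nLarge st.nLS + st.nM + st.nS : ℕ) : ℝ) := rfl
  have hinv := ((fold_inv I) ⟨0, 0, 0, false, 0, 0, 0, 0, 0, 0⟩ 0 0 0 hI init_inv)
  rw [zero_add, zero_add, zero_add, ← hst] at hinv
  obtain ⟨c1, c2, c3, c4, c5, c6, c7, c8, c9, c10, c11, c12⟩ := hinv
  rw [map_ite_sum I (fun a => 1/2 < a)] at c10
  rw [map_ite_sum I (fun a => 1/3 < a)] at c11
  -- OPT lower bounds
  have hOPT12 : ((Finset.univ.filter (fun i : Fin I.length => 1/2 < I.get i)).card : ℝ)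
      ≤ (OPT I : ℝ) := by exact_mod_cast opt_half I hI
  have hOPT13 : ((Finset.univ.filter (fun i : Fin I.length => 1/3 < I.get i)).card : ℝ)
      ≤ 2 * (OPT I : ℝ) := by exact_mod_cast opt_third I hI
  have hOPTS : I.sum ≤ (OPT I : ℝ) := opt_size I (fun a ha => (hI a ha).2)
  have htn : ((st.mOpen.toNat : ℕ) : ℝ) ≤ 1 := by cases st.mOpen <;> simp
  have hb12 : (st.nXL : ℝ) + (st.nLarge : ℝ) ≤ (OPT I : ℝ) := le_trans c10 hOPT12
  have hb13 : (st.nXL : ℝ) + (st.nLarge : ℝ) + 2 * (st.nM : ℝ) ≤ 2 * (OPT I : ℝ) + 1 := by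
    linarith
  have hbS : 2/3 * (st.nXL : ℝ) + 1/2 * (st.nLarge : ℝ) + 2/3 * (st.nM : ℝ) + st.sizeS
      ≤ (OPT I : ℝ) + 1/3 := by linarith
  have hnS : (st.nS : ℝ) ≤ 3/2 * (st.sizeS - st.sizeSL) + 1 := by
    rcases Nat.eq_zero_or_pos st.nS with h0 | hp
    · rw [h0]; push_cast; linarith
    · have h6' := c6 hp
      have h1' : (1 : ℝ) ≤ (st.nS : ℝ) := by exact_mod_cast hp
      linarith
  have hnLS : (st.nLS : ℝ) ≤ 6 * st.sizeSL + 1 := by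
    rcases Nat.eq_zero_or_pos st.nLS with h0 | hp
    · rw [h0]; push_cast; linarith
    · have h7' := c7 hp
      have h1' : (1 : ℝ) ≤ (st.nLS : ℝ) := by exact_mod_cast hp
      linarith
  have hX : (0:ℝ) ≤ (st.nXL : ℝ) := Nat.cast_nonneg _
  have hLn : (0:ℝ) ≤ (st.nLarge : ℝ) := Nat.cast_nonneg _
  have hM : (0:ℝ) ≤ (st.nM : ℝ) := Nat.cast_nonneg _
  rw [hPH3]
  push_cast [Nat.cast_max]
  rcases le_total ((st.nLS : ℝ)) ((st.nLarge : ℝ)) with hc | hc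
  · rw [max_eq_left hc]
    linarith
  · rw [max_eq_right hc]
    linarith
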